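/- For every integer k ≥ 3, the map λ ↦ λ f_{k−1}(λ)/f_k(λ) from (0, ∞) to (k, ∞) is a bijection; in particular, for every real c > k there is a unique λ > 0 with λ f_{k−1}(λ)/f_k(λ) = c. -/

import Mathlib

open Real Finset

noncomputable def fTail (j : ℕ) (x : ℝ) : ℝ :=
  Real.exp x - ∑ i ∈ Finset.range j, x ^ i / (Nat.factorial i : ℝ)

lemma summable_tail (j : ℕ) (x : ℝ) :
    Summable (fun i : ℕ => x ^ (i + j) / (Nat.factorial (i + j) : ℝ)) :=
  (summable_nat_add_iff j).2 (Real.summable_pow_div_factorial x)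

lemma fTail_tsum (j : ℕ) (x : ℝ) :
    fTail j x = ∑' i : ℕ, x ^ (i + j) / (Nat.factorial (i + j) : ℝ) := by
  have hexp : Real.exp x = ∑' n : ℕ, x ^ n / (Nat.factorial n : ℝ) := by
    rw [Real.exp_eq_exp_ℝ, NormedSpace.exp_eq_tsum_div]
  have := Summable.sum_add_tsum_nat_add (f := fun n : ℕ => x ^ n / (Nat.factorial n : ℝ)) j
    (Real.summable_pow_div_factorial x)
  rw [fTail, hexp, ← this]
  ring

lemma fTail_succ (j : ℕ) (x : ℝ) :
    fTail j x = fTail (j + 1) x + x ^ j / (Nat.factorial j : ℝ) := by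
  simp [fTail, Finset.sum_range_succ]
  ring

lemma fTail_pos (j : ℕ) {x : ℝ} (hx : 0 < x) : 0 < fTail j x := by
  rw [fTail_tsum]
  refine Summable.tsum_pos (summable_tail j x) (fun i => by positivity) 0 (by positivity)

lemma fTail_ge (j : ℕ) {x : ℝ} (hx : 0 < x) :
    x ^ j / (Nat.factorial j : ℝ) ≤ fTail j x := by
  rw [fTail_tsum]
  have := Summable.le_tsum (summable_tail j x) 0 (fun i _ => by positivity)
  simpa using this

lemma term_eq (n i : ℕ) (p q r x : ℝ) :
    (p * ((i:ℝ) + n + 2) * ((i:ℝ) + n + 1) + q * ((i:ℝ) + n + 2) + r)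
        * (x ^ (i + (n + 2)) / (Nat.factorial (i + (n + 2)) : ℝ))
      = p * x ^ 2 * (x ^ (i + n) / (Nat.factorial (i + n) : ℝ))
        + q * x * (x ^ (i + (n + 1)) / (Nat.factorial (i + (n + 1)) : ℝ))
        + r * (x ^ (i + (n + 2)) / (Nat.factorial (i + (n + 2)) : ℝ)) := by
  have h2 : (Nat.factorial (i + (n + 2)) : ℝ)
      = ((i:ℝ) + n + 2) * ((i:ℝ) + n + 1) * (Nat.factorial (i + n) : ℝ) := by
    have : i + (n + 2) = (i + n) + 1 + 1 := by ring
    rw [this, Nat.factorial_succ, Nat.factorial_succ]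
    push_cast; ring
  have h1 : (Nat.factorial (i + (n + 1)) : ℝ)
      = ((i:ℝ) + n + 1) * (Nat.factorial (i + n) : ℝ) := by
    have : i + (n + 1) = (i + n) + 1 := by ring
    rw [this, Nat.factorial_succ]; push_cast; ring
  have hfe : (0:ℝ) < (Nat.factorial (i + n) : ℝ) := by positivity
  have hpow : x ^ (i + (n + 2)) = x ^ (i + n) * x ^ 2 := by
    rw [← pow_add, Nat.add_assoc]
  have hpow1 : x ^ (i + (n + 1)) = x ^ (i + n) * x := by
    rw [← pow_succ, Nat.add_assoc]
  rw [hpow, hpow1, h1, h2]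
  field_simp

lemma summable_combo (n : ℕ) (p q r x : ℝ) :
    Summable (fun i : ℕ => (p * ((i:ℝ) + n + 2) * ((i:ℝ) + n + 1) + q * ((i:ℝ) + n + 2) + r)
        * (x ^ (i + (n + 2)) / (Nat.factorial (i + (n + 2)) : ℝ))) := by
  refine Summable.congr ?_ (fun i => (term_eq n i p q r x).symm)
  exact (((summable_tail n x).mul_left (p * x ^ 2)).add
    ((summable_tail (n+1) x).mul_left (q * x))).add ((summable_tail (n+2) x).mul_left r)

lemma combo (n : ℕ) (p q r x : ℝ) :
    p * x ^ 2 * fTail n x + q * x * fTail (n + 1) x + r * fTail (n + 2) x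
      = ∑' i : ℕ, (p * ((i:ℝ) + n + 2) * ((i:ℝ) + n + 1) + q * ((i:ℝ) + n + 2) + r)
          * (x ^ (i + (n + 2)) / (Nat.factorial (i + (n + 2)) : ℝ)) := by
  rw [fTail_tsum n x, fTail_tsum (n+1) x, fTail_tsum (n+2) x,
    ← tsum_mul_left, ← tsum_mul_left, ← tsum_mul_left]
  rw [← Summable.tsum_add ((summable_tail n x).mul_left (p * x ^ 2))
        ((summable_tail (n+1) x).mul_left (q * x))]
  rw [← Summable.tsum_add (((summable_tail n x).mul_left (p * x ^ 2)).add
        ((summable_tail (n+1) x).mul_left (q * x)))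
        ((summable_tail (n+2) x).mul_left r)]
  exact tsum_congr fun i => (term_eq n i p q r x).symm

lemma combo_pos (n : ℕ) (p q r : ℝ) {x : ℝ} (hx : 0 < x)
    (h0 : ∀ i : ℕ, 0 ≤ p * ((i:ℝ) + n + 2) * ((i:ℝ) + n + 1) + q * ((i:ℝ) + n + 2) + r)
    (i0 : ℕ)
    (h1 : 0 < p * ((i0:ℝ) + n + 2) * ((i0:ℝ) + n + 1) + q * ((i0:ℝ) + n + 2) + r) :
    0 < p * x ^ 2 * fTail n x + q * x * fTail (n + 1) x + r * fTail (n + 2) x := by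
  rw [combo]
  refine Summable.tsum_pos (summable_combo n p q r x) (fun i => ?_) i0 ?_
  · have := h0 i; positivity
  · have := h1; positivity

lemma hasDerivAt_fTail (j : ℕ) (x : ℝ) :
    HasDerivAt (fTail (j + 1)) (fTail j x) x := by
  have hsum : HasDerivAt (fun y : ℝ => ∑ i ∈ Finset.range (j + 1), y ^ i / (Nat.factorial i : ℝ))
      (∑ i ∈ Finset.range j, x ^ i / (Nat.factorial i : ℝ)) x := by
    have h : ∀ i ∈ Finset.range (j + 1),
        HasDerivAt (fun y : ℝ => y ^ i / (Nat.factorial i : ℝ))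
          ((i : ℝ) * x ^ (i - 1) / (Nat.factorial i : ℝ)) x := by
      intro i _
      exact (hasDerivAt_pow i x).div_const _
    have := HasDerivAt.fun_sum h
    refine this.congr_deriv ?_
    rw [eq_comm, Finset.sum_range_succ']
    have hterm : ∀ i : ℕ, (((i+1 : ℕ)):ℝ) * x ^ (i + 1 - 1) / (Nat.factorial (i+1) : ℝ)
        = x ^ i / (Nat.factorial i : ℝ) := by
      intro i
      rw [Nat.add_sub_cancel, Nat.factorial_succ]
      push_cast
      rw [mul_div_mul_left _ _ (by positivity : ((i:ℝ) + 1) ≠ 0)]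
    simp only [Nat.cast_add, Nat.cast_one, Nat.add_sub_cancel] at hterm
    simp [hterm]
  exact (Real.hasDerivAt_exp x).fun_sub hsum

lemma fTail_continuous (j : ℕ) : Continuous (fTail j) := by
  unfold fTail
  exact Real.continuous_exp.sub
    (continuous_finset_sum _ fun i _ => (continuous_pow i).div_const _)

/-- for `k ≥ 3`, `λ ↦ λ f_{k-1}(λ)/f_k(λ)` is a bijection from `(0,∞)`
onto `(k,∞)`; in particular for every `c > k` there is a unique `λ > 0` with
`λ f_{k-1}(λ)/f_k(λ) = c`. -/
theorem mean_map_bijOn (k : ℕ) (hk : 3 ≤ k) :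
    Set.BijOn (fun lam : ℝ => lam * fTail (k - 1) lam / fTail k lam)
      (Set.Ioi 0) (Set.Ioi (k : ℝ)) ∧
    ∀ c : ℝ, (k : ℝ) < c →
      ∃! lam : ℝ, 0 < lam ∧ lam * fTail (k - 1) lam / fTail k lam = c := by
  obtain ⟨m, rfl⟩ : ∃ m, k = m + 3 := ⟨k - 3, by omega⟩
  simp only [show m + 3 - 1 = m + 2 from rfl]
  set g : ℝ → ℝ := fun lam => lam * fTail (m + 2) lam / fTail (m + 3) lam with hgdef
  have hK : ((m + 3 : ℕ) : ℝ) = (m : ℝ) + 3 := by push_cast; ring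
  rw [hK]
  -- basic positivity
  have hfpos : ∀ x : ℝ, 0 < x → 0 < fTail (m + 3) x := fun x hx => fTail_pos _ hx
  -- g x > m + 3
  have hlow : ∀ x : ℝ, 0 < x → ((m : ℝ) + 3) * fTail (m + 3) x < x * fTail (m + 2) x := by
    intro x hx
    have := combo_pos (m + 1) 0 1 (-((m : ℝ) + 3)) hx
      (fun i => by push_cast; nlinarith [Nat.cast_nonneg (α := ℝ) i]) 1
      (by push_cast; linarith)
    push_cast at this
    nlinarith [this]
  have hgk : ∀ x : ℝ, 0 < x → (m : ℝ) + 3 < g x := by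
    intro x hx
    rw [hgdef]
    simp only
    rw [lt_div_iff₀ (hfpos x hx)]
    exact hlow x hx
  -- g x > x
  have hgx : ∀ x : ℝ, 0 < x → x < g x := by
    intro x hx
    rw [hgdef]; simp only
    rw [lt_div_iff₀ (hfpos x hx)]
    have h := fTail_succ (m + 2) x
    have hmon : (0:ℝ) < x ^ (m + 2) / (Nat.factorial (m + 2) : ℝ) := by positivity
    nlinarith [hfpos x hx]
  -- g x ≤ x + (m+3)
  have hub : ∀ x : ℝ, 0 < x → g x ≤ x + ((m : ℝ) + 3) := by
    intro x hx
    rw [hgdef]; simp only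
    rw [div_le_iff₀ (hfpos x hx)]
    have h := fTail_succ (m + 2) x
    have hge := fTail_ge (m + 3) hx
    have hfact : (Nat.factorial (m + 3) : ℝ) = ((m : ℝ) + 3) * (Nat.factorial (m + 2) : ℝ) := by
      rw [show m + 3 = (m + 2) + 1 from rfl, Nat.factorial_succ]; push_cast; ring
    have h1 : x ^ (m + 3) / (Nat.factorial (m + 2) : ℝ) ≤ ((m : ℝ) + 3) * fTail (m + 3) x := by
      have h2 : (0:ℝ) < (Nat.factorial (m + 2) : ℝ) := by positivity
      have heq2 : x ^ (m + 3) / (Nat.factorial (m + 2) : ℝ)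
          = ((m : ℝ) + 3) * (x ^ (m + 3) / (Nat.factorial (m + 3) : ℝ)) := by
        rw [hfact]; field_simp
      rw [heq2]
      exact mul_le_mul_of_nonneg_left hge (by positivity)
    have hxp : x * x ^ (m + 2) = x ^ (m + 3) := by
      rw [← pow_succ']
    simp only [show m + 2 + 1 = m + 3 from rfl] at h
    calc x * fTail (m + 2) x
        = x * fTail (m + 3) x + x ^ (m + 3) / (Nat.factorial (m + 2) : ℝ) := by
          rw [h, mul_add, ← hxp]; ring
      _ ≤ x * fTail (m + 3) x + ((m : ℝ) + 3) * fTail (m + 3) x := by linarith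
      _ = (x + ((m : ℝ) + 3)) * fTail (m + 3) x := by ring
  -- strict monotonicity of the auxiliary function, for c > m+3
  have hmono : ∀ c : ℝ, (m : ℝ) + 3 < c →
      StrictMonoOn (fun x : ℝ => x ^ (-c) * (x * fTail (m + 2) x - c * fTail (m + 3) x))
        (Set.Ioi 0) := by
    intro c hc
    set G : ℝ → ℝ := fun x => x ^ (-c) * (x * fTail (m + 2) x - c * fTail (m + 3) x) with hGdef
    have hder : ∀ x : ℝ, 0 < x → HasDerivAt G
        ((-c * x ^ (-c - 1)) * (x * fTail (m + 2) x - c * fTail (m + 3) x)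
          + x ^ (-c) * (fTail (m + 2) x + x * fTail (m + 1) x - c * fTail (m + 2) x)) x := by
      intro x hx
      have h1 : HasDerivAt (fun y : ℝ => y ^ (-c)) (-c * x ^ (-c - 1)) x :=
        Real.hasDerivAt_rpow_const (Or.inl hx.ne')
      have h2 : HasDerivAt (fun y : ℝ => y * fTail (m + 2) y - c * fTail (m + 3) y)
          (fTail (m + 2) x + x * fTail (m + 1) x - c * fTail (m + 2) x) x := by
        have ha := (hasDerivAt_id x).fun_mul (hasDerivAt_fTail (m + 1) x)
        have hb := (hasDerivAt_fTail (m + 2) x).const_mul c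
        simpa [mul_comm] using ha.fun_sub hb
      simpa using h1.fun_mul h2
    have hderpos : ∀ x : ℝ, 0 < x →
        0 < (-c * x ^ (-c - 1)) * (x * fTail (m + 2) x - c * fTail (m + 3) x)
          + x ^ (-c) * (fTail (m + 2) x + x * fTail (m + 1) x - c * fTail (m + 2) x) := by
      intro x hx
      have hS : 0 < x ^ 2 * fTail (m + 1) x + (1 - 2 * c) * x * fTail (m + 2) x
          + c ^ 2 * fTail (m + 3) x := by
        have := combo_pos (m + 1) 1 (1 - 2 * c) (c ^ 2) hx
          (fun i => by push_cast; nlinarith [sq_nonneg ((i : ℝ) + (m : ℝ) + 3 - c)]) 0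
          (by push_cast; nlinarith [sq_nonneg ((m : ℝ) + 3 - c)])
        linarith [this]
      have hrw : x ^ (-c - 1) * x = x ^ (-c) := by
        rw [← Real.rpow_add_one hx.ne' (-c - 1)]; ring_nf
      have hrpos : 0 < x ^ (-c - 1) := Real.rpow_pos_of_pos hx _
      calc 0 < x ^ (-c - 1) * (x ^ 2 * fTail (m + 1) x + (1 - 2 * c) * x * fTail (m + 2) x
            + c ^ 2 * fTail (m + 3) x) := by positivity
        _ = (-c * x ^ (-c - 1)) * (x * fTail (m + 2) x - c * fTail (m + 3) x)
          + x ^ (-c) * (fTail (m + 2) x + x * fTail (m + 1) x - c * fTail (m + 2) x) := by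
          rw [← hrw]; ring
    refine strictMonoOn_of_deriv_pos (convex_Ioi 0) ?_ ?_
    · intro x hx
      exact ((hder x hx).continuousAt).continuousWithinAt
    · intro x hx
      rw [interior_Ioi] at hx
      rw [(hder x hx).deriv]
      exact hderpos x hx
  -- injectivity
  have hinj : Set.InjOn g (Set.Ioi 0) := by
    intro x1 hx1 x2 hx2 heq
    set c := g x1 with hc
    have hc3 : (m : ℝ) + 3 < c := hgk x1 hx1
    have hzero : ∀ x : ℝ, 0 < x → g x = c → x * fTail (m + 2) x - c * fTail (m + 3) x = 0 := by
      intro x hx hgx'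
      rw [hgdef] at hgx'
      simp only at hgx'
      rw [div_eq_iff (hfpos x hx).ne'] at hgx'
      rw [sub_eq_zero]
      exact hgx'
    have h1 := hzero x1 hx1 hc.symm
    have h2 := hzero x2 hx2 (heq.symm.trans hc.symm)
    have hG1 : (fun x : ℝ => x ^ (-c) * (x * fTail (m + 2) x - c * fTail (m + 3) x)) x1 = 0 := by
      simp only; rw [h1, mul_zero]
    have hG2 : (fun x : ℝ => x ^ (-c) * (x * fTail (m + 2) x - c * fTail (m + 3) x)) x2 = 0 := by
      simp only; rw [h2, mul_zero]
    exact (hmono c hc3).injOn hx1 hx2 (hG1.trans hG2.symm)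
  -- surjectivity
  have hsurj : Set.SurjOn g (Set.Ioi 0) (Set.Ioi ((m : ℝ) + 3)) := by
    intro c hc
    rw [Set.mem_Ioi] at hc
    set a : ℝ := (c - ((m : ℝ) + 3)) / 2 with ha
    have hapos : 0 < a := by rw [ha]; linarith
    have hab : a ≤ c := by rw [ha]; linarith
    have hcont : ContinuousOn g (Set.Icc a c) := by
      intro x hx
      have hxpos : 0 < x := lt_of_lt_of_le hapos hx.1
      exact (ContinuousAt.div
        (continuousAt_id.mul (fTail_continuous (m + 2)).continuousAt)
        (fTail_continuous (m + 3)).continuousAt (hfpos x hxpos).ne').continuousWithinAt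
    have hga : g a ≤ c := by
      have := hub a hapos
      rw [ha] at this ⊢
      linarith
    have hgc : c ≤ g c := le_of_lt (hgx c (by linarith))
    obtain ⟨x, hx, hxc⟩ := intermediate_value_Icc hab hcont ⟨hga, hgc⟩
    exact ⟨x, Set.mem_Ioi.mpr (lt_of_lt_of_le hapos hx.1), hxc⟩
  have hbij : Set.BijOn g (Set.Ioi 0) (Set.Ioi ((m : ℝ) + 3)) :=
    ⟨fun x hx => Set.mem_Ioi.mpr (hgk x (Set.mem_Ioi.mp hx)), hinj, hsurj⟩
  refine ⟨hbij, fun c hc => ?_⟩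
  obtain ⟨x, hx, hxc⟩ := hsurj (Set.mem_Ioi.mpr hc)
  refine ⟨x, ⟨Set.mem_Ioi.mp hx, hxc⟩, ?_⟩
  rintro y ⟨hy, hyc⟩
  exact hinj (Set.mem_Ioi.mpr hy) hx (hyc.trans hxc.symm)
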